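/- Let G = (X,Y,E) be a connected chain graph having at least three vertices, let t denote the number of pendant vertices of G, let P denote the set of all pendant vertices of G, and let P_A denote the set of vertices adjacent to a vertex of P. Then γ_r(G) = t + 1 if and only if either G is a star or the induced subgraph G' = G[(X ∪ Y) \ (P ∪ P_A)] is a star. -/

import Mathlib

/-- A set `D` is a restrained dominating set of `G` if every vertex not in `D`
is adjacent to a vertex in `D` and to a vertex outside `D`. -/
def IsRestrainedDominatingSet {V : Type*} (G : SimpleGraph V) (D : Finset V) : Prop :=
  (∀ v, v ∉ D → ∃ u ∈ D, G.Adj v u) ∧ (∀ v, v ∉ D → ∃ u, u ∉ D ∧ G.Adj v u)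

/-- The restrained domination number: minimum cardinality of a restrained dominating set. -/
noncomputable def restrainedDominationNumber {V : Type*} [Fintype V] (G : SimpleGraph V) : ℕ :=
  sInf {n | ∃ D : Finset V, IsRestrainedDominatingSet G D ∧ D.card = n}

/-- The subgraph of `G` induced by `S` is a star `K_{1,k}` (`k ≥ 1`): there is a center
`c ∈ S` adjacent (in `G`) to every other vertex of `S`, there is at least one other
vertex in `S`, and every edge of `G` inside `S` is incident to `c`. -/
def IsStarOn {V : Type*} (G : SimpleGraph V) (S : Finset V) : Prop :=
  ∃ c ∈ S, (∃ v ∈ S, v ≠ c) ∧ (∀ v ∈ S, v ≠ c → G.Adj c v) ∧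
    ∀ u ∈ S, ∀ v ∈ S, G.Adj u v → u = c ∨ v = c

lemma natSInf_eq' {S : Set ℕ} {k : ℕ} (h1 : k ∈ S) (h2 : ∀ m ∈ S, k ≤ m) : sInf S = k :=
  le_antisymm (Nat.sInf_le h1) (h2 _ (Nat.sInf_mem ⟨k, h1⟩))

/-- For a connected chain graph `G` with at least three vertices, `t` pendant vertices
forming the set `P`, and `P_A` the set of vertices adjacent to a vertex of `P`:
`γ_r(G) = t + 1` iff either `G` is a star or `G[(X ∪ Y) \ (P ∪ P_A)]` is a star. -/
theorem stmt_13 {V : Type*} [Fintype V] [DecidableEq V] (G : SimpleGraph V)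
    [DecidableRel G.Adj] (hconn : G.Connected) (hcard : 3 ≤ Fintype.card V)
    (X Y : Finset V) (hdisj : Disjoint X Y) (hunion : X ∪ Y = Finset.univ)
    (hbip : ∀ u v, G.Adj u v → (u ∈ X ∧ v ∈ Y) ∨ (u ∈ Y ∧ v ∈ X))
    (p : ℕ) (x : Fin p → V) (hxinj : Function.Injective x)
    (hxim : Finset.univ.image x = X)
    (hxchain : ∀ i j : Fin p, i ≤ j → G.neighborSet (x i) ⊆ G.neighborSet (x j))
    (P : Finset V) (hP : P = Finset.univ.filter (fun v => G.degree v = 1))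
    (t : ℕ) (ht : t = P.card)
    (PA : Finset V) (hPA : PA = Finset.univ.filter (fun v => ∃ u ∈ P, G.Adj v u)) :
    restrainedDominationNumber G = t + 1 ↔
      (IsStarOn G Finset.univ ∨ IsStarOn G (Finset.univ \ (P ∪ PA))) := by
  classical
  -- basic bipartition facts
  have hXY : ∀ v : V, v ∈ X ∨ v ∈ Y := by
    intro v
    have : v ∈ X ∪ Y := by rw [hunion]; exact Finset.mem_univ v
    exact Finset.mem_union.mp this
  have hnXY : ∀ v : V, v ∈ X → v ∉ Y := fun v hv => Finset.disjoint_left.mp hdisj hv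
  have hsideXY : ∀ u v : V, G.Adj u v → u ∈ X → v ∈ Y := by
    intro u v h hu
    rcases hbip u v h with ⟨_, h2⟩ | ⟨h1, _⟩
    · exact h2
    · exact absurd h1 (hnXY u hu)
  have hsideYX : ∀ u v : V, G.Adj u v → u ∈ Y → v ∈ X := by
    intro u v h hu
    rcases hbip u v h with ⟨h1, _⟩ | ⟨_, h2⟩
    · exact absurd hu (hnXY u h1)
    · exact h2
  have hPmem : ∀ v : V, v ∈ P ↔ G.degree v = 1 := by intro v; rw [hP]; simp
  have hPAmem : ∀ v : V, v ∈ PA ↔ ∃ u ∈ P, G.Adj v u := by intro v; rw [hPA]; simp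
  have hXmem : ∀ a : V, a ∈ X ↔ ∃ i, x i = a := by intro a; rw [← hxim]; simp
  -- every vertex has a neighbor
  have hne : ∀ v : V, ∃ u, G.Adj v u := by
    intro v
    obtain ⟨w, hw⟩ := Fintype.exists_ne_of_one_lt_card (by omega) v
    obtain ⟨pw⟩ := hconn v w
    cases pw with
    | nil => exact absurd rfl hw
    | cons h _ => exact ⟨_, h⟩
  -- pendant vertices have a unique neighbor
  have huniq : ∀ q, q ∈ P → ∀ a b, G.Adj q a → G.Adj q b → a = b := by
    intro q hq a b ha hb
    have hdeg : (G.neighborFinset q).card = 1 := (hPmem q).mp hq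
    obtain ⟨z, hz⟩ := Finset.card_eq_one.mp hdeg
    have ha' : a ∈ G.neighborFinset q := by simpa using ha
    have hb' : b ∈ G.neighborFinset q := by simpa using hb
    rw [hz, Finset.mem_singleton] at ha' hb'
    rw [ha', hb']
  -- no two pendant vertices are adjacent
  have hPP : ∀ u v, u ∈ P → v ∈ P → ¬ G.Adj u v := by
    intro u v hu hv huv
    obtain ⟨w, hwu, hwv⟩ : ∃ w : V, w ≠ u ∧ w ≠ v := by
      by_contra hcon
      push_neg at hcon
      have hsub : (Finset.univ : Finset V) ⊆ {u, v} := by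
        intro z _
        by_cases hz : z = u
        · simp [hz]
        · simp [hcon z hz]
      have h1 := Finset.card_le_card hsub
      have h2 : ({u, v} : Finset V).card ≤ 2 := by
        apply le_trans (Finset.card_insert_le _ _); simp
      rw [Finset.card_univ] at h1
      omega
    have key : ∀ (a b : V) (pw : G.Walk a b), (a = u ∨ a = v) → (b = u ∨ b = v) := by
      intro a b pw
      induction pw with
      | nil => exact id
      | cons h q ih =>
        intro ha
        apply ih
        rcases ha with rfl | rfl
        · right; exact huniq _ hu _ v h huv
        · left; exact huniq _ hv _ u h (G.adj_symm huv)
    obtain ⟨pw⟩ := hconn u w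
    rcases key u w pw (Or.inl rfl) with h | h
    · exact hwu h
    · exact hwv h
  have hPnPA : ∀ v, v ∈ PA → v ∉ P := by
    intro v hv hvP
    obtain ⟨q, hq, hadj⟩ := (hPAmem v).mp hv
    exact hPP v q hvP hq hadj
  -- a non-pendant vertex has two distinct neighbors
  have htwo : ∀ v, v ∉ P → ∃ a b, a ≠ b ∧ G.Adj v a ∧ G.Adj v b := by
    intro v hv
    have hd1 : ¬ (G.neighborFinset v).card = 1 := fun h => hv ((hPmem v).mpr h)
    obtain ⟨u, hu⟩ := hne v
    have hu' : u ∈ G.neighborFinset v := by simpa using hu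
    have hpos : 1 ≤ (G.neighborFinset v).card := Finset.card_pos.mpr ⟨u, hu'⟩
    have h2 : 1 < (G.neighborFinset v).card := by omega
    obtain ⟨a, ha, b, hb, hab⟩ := Finset.one_lt_card.mp h2
    exact ⟨a, b, hab, by simpa using ha, by simpa using hb⟩
  -- any X-vertex adjacent to a pendant is adjacent to all of Y
  have hXall : ∀ a, a ∈ X → (∃ q, q ∈ P ∧ G.Adj a q) → ∀ y, y ∈ Y → G.Adj a y := by
    intro a haX hq y hyY
    obtain ⟨q, hqP, haq⟩ := hq
    obtain ⟨i, rfl⟩ := (hXmem a).mp haX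
    obtain ⟨u, hyu⟩ := hne y
    have huX : u ∈ X := hsideYX y u hyu hyY
    obtain ⟨j, rfl⟩ := (hXmem u).mp huX
    rcases le_total j i with hji | hij
    · have : y ∈ G.neighborSet (x i) :=
        hxchain j i hji (by simpa using hyu.symm)
      simpa using this
    · have hq2 : q ∈ G.neighborSet (x j) := hxchain i j hij (by simpa using haq)
      have heq : x j = x i :=
        huniq q hqP (x j) (x i) (G.adj_symm (by simpa using hq2)) (G.adj_symm haq)
      have : G.Adj (x j) y := hyu.symm
      rwa [heq] at this
  -- any Y-vertex adjacent to a pendant is adjacent to all of X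
  have hYall : ∀ b, b ∈ Y → (∃ q, q ∈ P ∧ G.Adj b q) → ∀ u, u ∈ X → G.Adj b u := by
    intro b hbY hq u huX
    obtain ⟨q, hqP, hbq⟩ := hq
    have hqX : q ∈ X := hsideYX b q hbq hbY
    obtain ⟨s, rfl⟩ := (hXmem q).mp hqX
    obtain ⟨j, rfl⟩ := (hXmem u).mp huX
    rcases le_total s j with h | h
    · have : b ∈ G.neighborSet (x j) := hxchain s j h (by simpa using hbq.symm)
      exact (G.adj_symm (by simpa using this))
    · obtain ⟨z, hz⟩ := hne (x j)
      have hz2 : z ∈ G.neighborSet (x s) := hxchain j s h (by simpa using hz)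
      have hzb : z = b := huniq (x s) hqP z b (by simpa using hz2) (G.adj_symm hbq)
      exact (hzb ▸ hz).symm
  -- PA ∩ X is a subsingleton
  have hPAX : ∀ a1 a2, a1 ∈ PA → a1 ∈ X → a2 ∈ PA → a2 ∈ X → a1 = a2 := by
    intro a1 a2 h1 h1X h2 h2X
    obtain ⟨q1, hq1, ha1⟩ := (hPAmem a1).mp h1
    obtain ⟨q2, hq2, ha2⟩ := (hPAmem a2).mp h2
    have hq2Y : q2 ∈ Y := hsideXY a2 q2 ha2 h2X
    have hadj : G.Adj a1 q2 := hXall a1 h1X ⟨q1, hq1, ha1⟩ q2 hq2Y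
    exact huniq q2 hq2 a1 a2 (G.adj_symm hadj) (G.adj_symm ha2)
  -- PA ∩ Y is a subsingleton
  have hPAY : ∀ b1 b2, b1 ∈ PA → b1 ∈ Y → b2 ∈ PA → b2 ∈ Y → b1 = b2 := by
    intro b1 b2 h1 h1Y h2 h2Y
    obtain ⟨q1, hq1, hb1⟩ := (hPAmem b1).mp h1
    obtain ⟨q2, hq2, hb2⟩ := (hPAmem b2).mp h2
    have hq2X : q2 ∈ X := hsideYX b2 q2 hb2 h2Y
    have hadj : G.Adj b1 q2 := hYall b1 h1Y ⟨q1, hq1, hb1⟩ q2 hq2X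
    exact huniq q2 hq2 b1 b2 (G.adj_symm hadj) (G.adj_symm hb2)
  -- restrained dominating sets contain all pendant vertices
  have hPsub : ∀ D : Finset V, IsRestrainedDominatingSet G D → P ⊆ D := by
    intro D hD q hq
    by_contra hqD
    obtain ⟨u1, hu1D, hadj1⟩ := hD.1 q hqD
    obtain ⟨u2, hu2D, hadj2⟩ := hD.2 q hqD
    have := huniq q hq u1 u2 hadj1 hadj2
    exact hu2D (this ▸ hu1D)
  have hunivRDS : IsRestrainedDominatingSet G Finset.univ :=
    ⟨fun v hv => absurd (Finset.mem_univ v) hv, fun v hv => absurd (Finset.mem_univ v) hv⟩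
  have hSne : {n | ∃ D : Finset V, IsRestrainedDominatingSet G D ∧ D.card = n}.Nonempty :=
    ⟨_, Finset.univ, hunivRDS, rfl⟩
  set Gf := Finset.univ \ (P ∪ PA) with hGfdef
  have hGfmem : ∀ v : V, v ∈ Gf ↔ v ∉ P ∧ v ∉ PA := by
    intro v; simp [hGfdef]
  have hGnoP : ∀ v, v ∈ Gf → ∀ u, G.Adj v u → u ∉ P := by
    intro v hv u hadj hu
    exact ((hGfmem v).mp hv).2 ((hPAmem v).mpr ⟨u, hu, hadj⟩)
  unfold restrainedDominationNumber
  constructor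
  · -- forward direction
    intro h
    have hmemS := Nat.sInf_mem hSne
    rw [h] at hmemS
    obtain ⟨D, hD, hDcard⟩ := hmemS
    have hPD := hPsub D hD
    by_cases hGfne : Gf.Nonempty
    · right
      -- D = insert w P for some w ∉ P
      have hsd : (D \ P).card = 1 := by
        rw [Finset.card_sdiff_of_subset hPD]; omega
      obtain ⟨w, hw⟩ := Finset.card_eq_one.mp hsd
      have hwDP : w ∈ D \ P := hw ▸ Finset.mem_singleton_self w
      have hwP : w ∉ P := (Finset.mem_sdiff.mp hwDP).2
      have hDeq : D = insert w P := by
        apply Finset.ext; intro z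
        constructor
        · intro hz
          by_cases hzP : z ∈ P
          · exact Finset.mem_insert_of_mem hzP
          · have : z ∈ D \ P := Finset.mem_sdiff.mpr ⟨hz, hzP⟩
            rw [hw, Finset.mem_singleton] at this
            simp [this]
        · intro hz
          rcases Finset.mem_insert.mp hz with rfl | hzP
          · exact (Finset.mem_sdiff.mp hwDP).1
          · exact hPD hzP
      have hadjw : ∀ v, v ∈ Gf → v ≠ w → G.Adj v w := by
        intro v hv hvw
        have hvP : v ∉ P := ((hGfmem v).mp hv).1
        have hvD : v ∉ D := by rw [hDeq]; simp [hvw, hvP]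
        obtain ⟨u, huD, hadj⟩ := hD.1 v hvD
        rw [hDeq] at huD
        rcases Finset.mem_insert.mp huD with rfl | huP
        · exact hadj
        · exact absurd huP (hGnoP v hv u hadj)
      have hwGf : w ∈ Gf := by
        by_contra hwGf
        rcases hXY w with hwX | hwY
        · have hGfY : ∀ v, v ∈ Gf → v ∈ Y := by
            intro v hv
            rcases hXY v with hvX | hvY
            · exfalso
              have hvw : v ≠ w := fun e => hwGf (e ▸ hv)
              exact hnXY w hwX (hsideXY v w (hadjw v hv hvw) hvX)
            · exact hvY
          obtain ⟨g, hg⟩ := hGfne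
          have hgY := hGfY g hg
          have hgP : g ∉ P := ((hGfmem g).mp hg).1
          obtain ⟨a, b, hab, hga, hgb⟩ := htwo g hgP
          have haX : a ∈ X := hsideYX g a hga hgY
          have hbX : b ∈ X := hsideYX g b hgb hgY
          have haPA : a ∈ PA := by
            by_contra h'
            have : a ∈ Gf := (hGfmem a).mpr ⟨hGnoP g hg a hga, h'⟩
            exact hnXY a haX (hGfY a this)
          have hbPA : b ∈ PA := by
            by_contra h'
            have : b ∈ Gf := (hGfmem b).mpr ⟨hGnoP g hg b hgb, h'⟩
            exact hnXY b hbX (hGfY b this)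
          exact hab (hPAX a b haPA haX hbPA hbX)
        · have hGfX : ∀ v, v ∈ Gf → v ∈ X := by
            intro v hv
            rcases hXY v with hvX | hvY
            · exact hvX
            · exfalso
              have hvw : v ≠ w := fun e => hwGf (e ▸ hv)
              have := hsideYX v w (hadjw v hv hvw) hvY
              exact hnXY w this hwY
          obtain ⟨g, hg⟩ := hGfne
          have hgX := hGfX g hg
          have hgP : g ∉ P := ((hGfmem g).mp hg).1
          obtain ⟨a, b, hab, hga, hgb⟩ := htwo g hgP
          have haY : a ∈ Y := hsideXY g a hga hgX
          have hbY : b ∈ Y := hsideXY g b hgb hgX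
          have haPA : a ∈ PA := by
            by_contra h'
            have : a ∈ Gf := (hGfmem a).mpr ⟨hGnoP g hg a hga, h'⟩
            exact hnXY a (hGfX a this) haY
          have hbPA : b ∈ PA := by
            by_contra h'
            have : b ∈ Gf := (hGfmem b).mpr ⟨hGnoP g hg b hgb, h'⟩
            exact hnXY b (hGfX b this) hbY
          exact hab (hPAY a b haPA haY hbPA hbY)
      have hleaf : ∃ v, v ∈ Gf ∧ v ≠ w := by
        by_contra h'
        push_neg at h'
        obtain ⟨a, b, hab, hwa, hwb⟩ := htwo w hwP
        have key : ∀ z, G.Adj w z → z ∈ PA := by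
          intro z hz
          have hzP : z ∉ P := hGnoP w hwGf z hz
          by_contra h''
          have hzGf : z ∈ Gf := (hGfmem z).mpr ⟨hzP, h''⟩
          have := h' z hzGf
          exact G.irrefl (this ▸ hz)
        have haPA := key a hwa
        have hbPA := key b hwb
        rcases hXY w with hwX | hwY
        · exact hab (hPAY a b haPA (hsideXY w a hwa hwX) hbPA (hsideXY w b hwb hwX))
        · exact hab (hPAX a b haPA (hsideYX w a hwa hwY) hbPA (hsideYX w b hwb hwY))
      obtain ⟨l, hl, hlw⟩ := hleaf
      refine ⟨w, hwGf, ⟨l, hl, hlw⟩, fun v hv hvw => (hadjw v hv hvw).symm, ?_⟩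
      intro u hu v hv huv
      by_contra h'
      push_neg at h'
      obtain ⟨huw, hvw⟩ := h'
      have h1 := hadjw u hu huw
      have h2 := hadjw v hv hvw
      rcases hXY u with huX | huY
      · have hvY : v ∈ Y := hsideXY u v huv huX
        have hwY : w ∈ Y := hsideXY u w h1 huX
        have hwX : w ∈ X := hsideYX v w h2 hvY
        exact hnXY w hwX hwY
      · have hvX : v ∈ X := hsideYX u v huv huY
        have hwX : w ∈ X := hsideYX u w h1 huY
        have hwY : w ∈ Y := hsideXY v w h2 hvX
        exact hnXY w hwX hwY
    · left
      have huPA : ∀ v : V, v ∉ P → v ∈ PA := by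
        intro v hv
        by_contra h'
        exact hGfne ⟨v, (hGfmem v).mpr ⟨hv, h'⟩⟩
      have hstarOfSingle : ∀ a, a ∈ PA → (∀ v, v ∈ PA → v = a) →
          IsStarOn G Finset.univ := by
        intro a haPA hsingle
        have hleafP : ∀ v : V, v ≠ a → v ∈ P := by
          intro v hva
          by_contra h'
          exact hva (hsingle v (huPA v h'))
        have hadja : ∀ v : V, v ≠ a → G.Adj a v := by
          intro v hva
          have hvP := hleafP v hva
          obtain ⟨m, hm⟩ := hne v
          have hmPA : m ∈ PA := (hPAmem m).mpr ⟨v, hvP, hm.symm⟩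
          have hma := hsingle m hmPA
          exact (hma ▸ hm).symm
        obtain ⟨v1, hv1⟩ := Fintype.exists_ne_of_one_lt_card (by omega) a
        refine ⟨a, Finset.mem_univ a, ⟨v1, Finset.mem_univ v1, hv1⟩,
          fun v _ hv => hadja v hv, ?_⟩
        intro u _ v _ huv
        by_contra h'
        push_neg at h'
        exact hPP u v (hleafP u h'.1) (hleafP v h'.2) huv
      -- get an element of PA
      have hPne : P.Nonempty := by
        by_contra h'
        rw [Finset.not_nonempty_iff_eq_empty] at h'
        have hpos : 0 < Fintype.card V := by omega
        obtain ⟨v0⟩ := Fintype.card_pos_iff.mp hpos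
        have hv0 : v0 ∈ PA := huPA v0 (by simp [h'])
        obtain ⟨q, hq, _⟩ := (hPAmem v0).mp hv0
        simp [h'] at hq
      obtain ⟨q0, hq0⟩ := hPne
      obtain ⟨a0, ha0⟩ := hne q0
      have ha0PA : a0 ∈ PA := (hPAmem a0).mpr ⟨q0, hq0, ha0.symm⟩
      by_cases hXPA : ∃ a, a ∈ PA ∧ a ∈ X
      · by_cases hYPA : ∃ b, b ∈ PA ∧ b ∈ Y
        · -- both sides: P itself is restrained dominating, contradiction
          exfalso
          obtain ⟨a, haPA, haX⟩ := hXPA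
          obtain ⟨b, hbPA, hbY⟩ := hYPA
          obtain ⟨qa, hqa, haqa⟩ := (hPAmem a).mp haPA
          have hab : G.Adj a b := hXall a haX ⟨qa, hqa, haqa⟩ b hbY
          have haP : a ∉ P := hPnPA a haPA
          have hbP : b ∉ P := hPnPA b hbPA
          have hPRDS : IsRestrainedDominatingSet G P := by
            constructor
            · intro v hv
              obtain ⟨q, hq, hadj⟩ := (hPAmem v).mp (huPA v hv)
              exact ⟨q, hq, hadj⟩
            · intro v hv
              have hvPA := huPA v hv
              rcases hXY v with hvX | hvY
              · have hva : v = a := hPAX v a hvPA hvX haPA haX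
                exact ⟨b, hbP, hva ▸ hab⟩
              · have hvb : v = b := hPAY v b hvPA hvY hbPA hbY
                exact ⟨a, haP, hvb ▸ hab.symm⟩
          have hle := Nat.sInf_le (show t ∈ {n | ∃ D : Finset V,
            IsRestrainedDominatingSet G D ∧ D.card = n} from ⟨P, hPRDS, ht.symm⟩)
          rw [h] at hle
          omega
        · -- PA lies in X
          have ha0X : a0 ∈ X := by
            rcases hXY a0 with h' | h'
            · exact h'
            · exact absurd ⟨a0, ha0PA, h'⟩ hYPA
          apply hstarOfSingle a0 ha0PA
          intro v hv
          rcases hXY v with hvX | hvY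
          · exact hPAX v a0 hv hvX ha0PA ha0X
          · exact absurd ⟨v, hv, hvY⟩ hYPA
      · -- PA lies in Y
        have ha0Y : a0 ∈ Y := by
          rcases hXY a0 with h' | h'
          · exact absurd ⟨a0, ha0PA, h'⟩ hXPA
          · exact h'
        apply hstarOfSingle a0 ha0PA
        intro v hv
        rcases hXY v with hvX | hvY
        · exact absurd ⟨v, hv, hvX⟩ hXPA
        · exact hPAY v a0 hv hvY ha0PA ha0Y
  · -- backward direction
    intro h
    rcases h with hstar | hstar
    · -- G is a star
      obtain ⟨c, -, ⟨v0, -, hv0c⟩, hcadj, hedge⟩ := hstar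
      have hcadj' : ∀ v, v ≠ c → G.Adj c v := fun v hv => hcadj v (Finset.mem_univ v) hv
      have hleafP : ∀ v : V, v ≠ c → v ∈ P := by
        intro v hvc
        apply (hPmem v).mpr
        have hNv : G.neighborFinset v = {c} := by
          ext u
          simp only [SimpleGraph.mem_neighborFinset, Finset.mem_singleton]
          constructor
          · intro hu
            rcases hedge v (Finset.mem_univ v) u (Finset.mem_univ u) hu with h' | h'
            · exact absurd h' hvc
            · exact h'
          · rintro rfl
            exact (hcadj' v hvc).symm
        show (G.neighborFinset v).card = 1
        rw [hNv]; simp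
      have hcP : c ∉ P := by
        have h2 : 1 < (Finset.univ.erase c).card := by
          rw [Finset.card_erase_of_mem (Finset.mem_univ c), Finset.card_univ]; omega
        obtain ⟨d1, hd1, d2, hd2, hd12⟩ := Finset.one_lt_card.mp h2
        have hd1c : d1 ≠ c := Finset.ne_of_mem_erase hd1
        have hd2c : d2 ≠ c := Finset.ne_of_mem_erase hd2
        intro hcP
        exact hd12 (huniq c hcP d1 d2 (hcadj' d1 hd1c) (hcadj' d2 hd2c))
      have hPeq : P = Finset.univ.erase c := by
        ext v
        rw [Finset.mem_erase]
        constructor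
        · intro hvP
          exact ⟨fun e => hcP (e ▸ hvP), Finset.mem_univ v⟩
        · intro hv
          exact hleafP v hv.1
      have htn : t + 1 = Fintype.card V := by
        rw [ht, hPeq, Finset.card_erase_of_mem (Finset.mem_univ c), Finset.card_univ]
        omega
      have hallD : ∀ D, IsRestrainedDominatingSet G D → D = Finset.univ := by
        intro D hD
        have hPD := hPsub D hD
        have hcD : c ∈ D := by
          by_contra hcD
          obtain ⟨u, huD, hcu⟩ := hD.2 c hcD
          have hu : u ≠ c := fun e => G.irrefl (e ▸ hcu)
          exact huD (hPD (hleafP u hu))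
        apply Finset.eq_univ_iff_forall.mpr
        intro v
        by_cases hvc : v = c
        · exact hvc ▸ hcD
        · exact hPD (hleafP v hvc)
      apply natSInf_eq'
      · exact ⟨Finset.univ, hunivRDS, by rw [Finset.card_univ]; omega⟩
      · rintro m ⟨D, hD, rfl⟩
        rw [hallD D hD, Finset.card_univ]
        omega
    · -- G' is a star
      obtain ⟨c, hcGf, ⟨l, hlGf, hlc⟩, hcadj, hedge⟩ := hstar
      have hcP : c ∉ P := ((hGfmem c).mp hcGf).1
      have hcPA : c ∉ PA := ((hGfmem c).mp hcGf).2
      have hclAdj : G.Adj c l := hcadj l hlGf hlc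
      -- witnesses outside D on each side
      have hwitY : ∃ z, z ∈ Y ∧ z ∉ P ∧ z ≠ c := by
        rcases hXY c with hcX | hcY
        · have hlY : l ∈ Y := hsideXY c l hclAdj hcX
          exact ⟨l, hlY, ((hGfmem l).mp hlGf).1, hlc⟩
        · have hlX : l ∈ X := hsideYX c l hclAdj hcY
          have hlP : l ∉ P := ((hGfmem l).mp hlGf).1
          obtain ⟨a, b, hab, hla, hlb⟩ := htwo l hlP
          have haY : a ∈ Y := hsideXY l a hla hlX
          have hbY : b ∈ Y := hsideXY l b hlb hlX
          by_cases haPA : a ∈ PA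
          · exact ⟨a, haY, hPnPA a haPA, fun e => hcPA (e ▸ haPA)⟩
          · by_cases hbPA : b ∈ PA
            · exact ⟨b, hbY, hPnPA b hbPA, fun e => hcPA (e ▸ hbPA)⟩
            · exfalso
              have haGf : a ∈ Gf := (hGfmem a).mpr ⟨hGnoP l hlGf a hla, haPA⟩
              have hbGf : b ∈ Gf := (hGfmem b).mpr ⟨hGnoP l hlGf b hlb, hbPA⟩
              rcases hedge l hlGf a haGf hla with e | e
              · exact hlc e
              · rcases hedge l hlGf b hbGf hlb with e' | e'
                · exact hlc e'
                · exact hab (e.trans e'.symm)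
      have hwitX : ∃ z, z ∈ X ∧ z ∉ P ∧ z ≠ c := by
        rcases hXY c with hcX | hcY
        · have hlY : l ∈ Y := hsideXY c l hclAdj hcX
          have hlP : l ∉ P := ((hGfmem l).mp hlGf).1
          obtain ⟨a, b, hab, hla, hlb⟩ := htwo l hlP
          have haX : a ∈ X := hsideYX l a hla hlY
          have hbX : b ∈ X := hsideYX l b hlb hlY
          by_cases haPA : a ∈ PA
          · exact ⟨a, haX, hPnPA a haPA, fun e => hcPA (e ▸ haPA)⟩
          · by_cases hbPA : b ∈ PA
            · exact ⟨b, hbX, hPnPA b hbPA, fun e => hcPA (e ▸ hbPA)⟩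
            · exfalso
              have haGf : a ∈ Gf := (hGfmem a).mpr ⟨hGnoP l hlGf a hla, haPA⟩
              have hbGf : b ∈ Gf := (hGfmem b).mpr ⟨hGnoP l hlGf b hlb, hbPA⟩
              rcases hedge l hlGf a haGf hla with e | e
              · exact hlc e
              · rcases hedge l hlGf b hbGf hlb with e' | e'
                · exact hlc e'
                · exact hab (e.trans e'.symm)
        · have hlX : l ∈ X := hsideYX c l hclAdj hcY
          exact ⟨l, hlX, ((hGfmem l).mp hlGf).1, hlc⟩
      have hDRDS : IsRestrainedDominatingSet G (insert c P) := by
        constructor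
        · intro v hv
          have hvc : v ≠ c := fun e => hv (e ▸ Finset.mem_insert_self c P)
          have hvP : v ∉ P := fun h' => hv (Finset.mem_insert_of_mem h')
          by_cases hvPA : v ∈ PA
          · obtain ⟨q, hq, hadj⟩ := (hPAmem v).mp hvPA
            exact ⟨q, Finset.mem_insert_of_mem hq, hadj⟩
          · have hvGf : v ∈ Gf := (hGfmem v).mpr ⟨hvP, hvPA⟩
            exact ⟨c, Finset.mem_insert_self c P, (hcadj v hvGf hvc).symm⟩
        · intro v hv
          have hvc : v ≠ c := fun e => hv (e ▸ Finset.mem_insert_self c P)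
          have hvP : v ∉ P := fun h' => hv (Finset.mem_insert_of_mem h')
          by_cases hvPA : v ∈ PA
          · obtain ⟨q, hq, hadjq⟩ := (hPAmem v).mp hvPA
            rcases hXY v with hvX | hvY
            · obtain ⟨z, hzY, hzP, hzc⟩ := hwitY
              refine ⟨z, ?_, hXall v hvX ⟨q, hq, hadjq⟩ z hzY⟩
              simp [Finset.mem_insert, hzc, hzP]
            · obtain ⟨z, hzX, hzP, hzc⟩ := hwitX
              refine ⟨z, ?_, hYall v hvY ⟨q, hq, hadjq⟩ z hzX⟩
              simp [Finset.mem_insert, hzc, hzP]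
          · have hvGf : v ∈ Gf := (hGfmem v).mpr ⟨hvP, hvPA⟩
            obtain ⟨a, b, hab, hva, hvb⟩ := htwo v hvP
            have haP := hGnoP v hvGf a hva
            have hbP := hGnoP v hvGf b hvb
            by_cases hac : a = c
            · refine ⟨b, ?_, hvb⟩
              have hbc : b ≠ c := fun e => hab (hac.trans e.symm)
              simp [Finset.mem_insert, hbc, hbP]
            · refine ⟨a, ?_, hva⟩
              simp [Finset.mem_insert, hac, haP]
      have hlow : ∀ D', IsRestrainedDominatingSet G D' → t + 1 ≤ D'.card := by
        intro D' hD'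
        have hPD' := hPsub D' hD'
        by_contra h'
        push_neg at h'
        have hPeq : P = D' := Finset.eq_of_subset_of_card_le hPD' (by omega)
        have hcD' : c ∉ D' := by rw [← hPeq]; exact hcP
        obtain ⟨u, huD', hcu⟩ := hD'.1 c hcD'
        have huP : u ∈ P := by rw [hPeq]; exact huD'
        exact hcPA ((hPAmem c).mpr ⟨u, huP, hcu⟩)
      apply natSInf_eq'
      · exact ⟨insert c P, hDRDS, by rw [Finset.card_insert_of_notMem hcP]; omega⟩
      · rintro m ⟨D', hD', rfl⟩
        exact hlow D' hD'
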